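/- Let U be three times differentiable with U' > 0, U'' < 0, and strictly decreasing absolute prudence. Then for fixed y > 0, the function H(w) = (U'(w−y) − U'(w)) / (−U''(w−y)) is strictly increasing in w on {w : w > y}. -/

import Mathlib

open Set

theorem stmt15 (U : ℝ → ℝ) (hU : ContDiff ℝ 3 U)
    (hU' : ∀ z, 0 < deriv U z) (hU'' : ∀ z, deriv (deriv U) z < 0)
    (hDAP : StrictAnti (fun z => -(deriv (deriv (deriv U)) z) / deriv (deriv U) z))
    (y : ℝ) (hy : 0 < y) :
    StrictMonoOn (fun w => (deriv U (w - y) - deriv U w) / (-(deriv (deriv U) (w - y))))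
      (Set.Ioi y) := by
  set f := deriv U with hf
  set g := deriv (deriv U) with hg
  set h := deriv (deriv (deriv U)) with hh
  have h3 : ContDiff ℝ (2 + 1) U := by norm_num; exact hU
  have hfC : ContDiff ℝ 2 f := (contDiff_succ_iff_deriv.mp h3).2.2
  have h2 : ContDiff ℝ (1 + 1) f := by norm_num; exact hfC
  have hgC : ContDiff ℝ 1 g := (contDiff_succ_iff_deriv.mp h2).2.2
  have hfd : Differentiable ℝ f := hfC.differentiable (by norm_num)
  have hgd : Differentiable ℝ g := hgC.differentiable (by norm_num)
  -- key inequality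
  have key : ∀ a w : ℝ, a < w → g w - g a < (-h a / g a) * (f a - f w) := by
    intro a w haw
    set c : ℝ := -h a / g a with hc
    have hG : ∀ t : ℝ, HasDerivAt (fun t => g t + c * f t) (h t + c * g t) t := by
      intro t
      have := (hgd t).hasDerivAt.add (((hfd t).hasDerivAt).const_mul c)
      have e1 : deriv g t = h t := rfl
      have e2 : deriv f t = g t := rfl
      simp only [e1, e2] at this
      exact this
    have hanti : StrictAntiOn (fun t => g t + c * f t) (Ici a) := by
      apply strictAntiOn_of_deriv_neg (convex_Ici a)
      · exact (hgC.continuous.add (continuous_const.mul hfC.continuous)).continuousOn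
      · intro t ht
        rw [(hG t).deriv]
        rw [interior_Ici] at ht
        have hPt : -h t / g t < c := hDAP ht
        have hgt := hU'' t
        have : -h t > c * g t := by
          have := (div_lt_iff_of_neg hgt).mp hPt
          linarith
        linarith
    have hGa := hanti self_mem_Ici haw.le haw
    simp only at hGa
    nlinarith [hGa]
  -- derivative of the target function
  have hpos : ∀ w : ℝ, HasDerivAt
      (fun w => (f (w - y) - f w) / (-(g (w - y))))
      (((g (w - y) - g w) * (-(g (w - y))) - (f (w - y) - f w) * (-(h (w - y)))) /
        (-(g (w - y)))^2) w := by
    intro w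
    have hsub : HasDerivAt (fun w : ℝ => w - y) 1 w := (hasDerivAt_id w).sub_const y
    have hN : HasDerivAt (fun w => f (w - y) - f w) (g (w - y) - g w) w := by
      have h1 := ((hfd (w - y)).hasDerivAt).comp w hsub
      have h1' : HasDerivAt (fun w => f (w - y)) (g (w - y)) w := by
        have e : deriv f (w - y) = g (w - y) := rfl
        simp only [mul_one, e] at h1
        exact h1
      exact h1'.sub ((hfd w).hasDerivAt)
    have hD' : HasDerivAt (fun w => -(g (w - y))) (-(h (w - y))) w := by
      have := (((hgd (w - y)).hasDerivAt).comp w hsub).neg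
      have e : deriv g (w - y) = h (w - y) := rfl
      simp only [mul_one, e] at this
      exact this
    exact hN.div hD' (by have := hU'' (w - y); linarith)
  have hderivpos : ∀ w : ℝ, 0 < deriv
      (fun w => (f (w - y) - f w) / (-(g (w - y)))) w := by
    intro w
    rw [(hpos w).deriv]
    set a := w - y with ha
    have haw : a < w := by simp only [ha]; linarith
    have hk := key a w haw
    have hga := hU'' a
    have hcg : (-h a / g a) * (-(g a)) = h a := by
      field_simp
      rw [mul_div_assoc, div_self (ne_of_lt hga), mul_one]
    have h2 : (g w - g a) * (-(g a)) < (-h a / g a * (f a - f w)) * (-(g a)) :=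
      mul_lt_mul_of_pos_right hk (by linarith)
    have h2' : (g w - g a) * (-(g a)) < (f a - f w) * h a := by
      rw [show (-h a / g a * (f a - f w)) * (-(g a))
          = (f a - f w) * ((-h a / g a) * (-(g a))) from by ring, hcg] at h2
      exact h2
    have hnum : 0 < (g a - g w) * (-(g a)) - (f a - f w) * (-(h a)) := by nlinarith [h2']
    exact div_pos hnum (pow_pos (by linarith) 2)
  exact (strictMono_of_deriv_pos hderivpos).strictMonoOn _
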